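/- Let f, g be continuous ρ-periodic functions with f(t) > 0 for all t and ∫₀^ρ g(s) ds > 0. Then the Bernoulli equation v' = g(t)v - f(t)v² has a unique strictly positive ρ-periodic solution, given by v(t) = [v(0)⁻¹ exp(-∫₀^t g) + ∫₀^t exp(-∫ₛ^t g) f(s) ds]⁻¹ with v(0) = (1 - exp(-∫₀^ρ g))/(∫₀^ρ exp(-∫ₛ^ρ g) f(s) ds). -/

import Mathlib

lemma bps_aux1 (a b x : ℝ) (hx : x ≠ 0) :
    a * x⁻¹ - b * (x⁻¹) ^ 2 = -(b - a * x) / x ^ 2 := by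
  field_simp
  ring

lemma bps_aux2 (a b x : ℝ) (hx : x ≠ 0) :
    b - a * x⁻¹ = -(a * x - b * x ^ 2) / x ^ 2 := by
  field_simp
  ring

lemma bps_primitive_hasDerivAt {g : ℝ → ℝ} (hg : Continuous g) (t : ℝ) :
    HasDerivAt (fun t => ∫ s in (0:ℝ)..t, g s) (g t) t :=
  intervalIntegral.integral_hasDerivAt_right (hg.intervalIntegrable _ _)
    (hg.stronglyMeasurableAtFilter _ _) hg.continuousAt

/-- Solutions of the homogeneous linear ODE d' = -g d. -/
lemma bps_hom {g : ℝ → ℝ} (hg : Continuous g) (d : ℝ → ℝ)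
    (hd : ∀ t, HasDerivAt d (-(g t * d t)) t) (t : ℝ) :
    d t = d 0 * Real.exp (-(∫ s in (0:ℝ)..t, g s)) := by
  set G : ℝ → ℝ := fun t => ∫ s in (0:ℝ)..t, g s with hGdef
  have hGd : ∀ t, HasDerivAt G (g t) t := bps_primitive_hasDerivAt hg
  have hφ : ∀ t, HasDerivAt (fun t => d t * Real.exp (G t)) 0 t := by
    intro t
    have h := (hd t).mul ((hGd t).exp)
    exact h.congr_deriv (by ring)
  have hconst : d t * Real.exp (G t) = d 0 * Real.exp (G 0) :=
    is_const_of_deriv_eq_zero (fun x => (hφ x).differentiableAt)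
      (fun x => (hφ x).deriv) t 0
  have hG0 : G 0 = 0 := intervalIntegral.integral_same
  rw [hG0, Real.exp_zero, mul_one] at hconst
  rw [show -(∫ s in (0:ℝ)..t, g s) = -(G t) from rfl, Real.exp_neg,
    eq_mul_inv_iff_mul_eq₀ (Real.exp_ne_zero _)]
  exact hconst

theorem bernoulli_periodic_solution
    (ρ : ℝ) (hρ : 0 < ρ) (f g : ℝ → ℝ)
    (hf : Continuous f) (hg : Continuous g)
    (hfp : Function.Periodic f ρ) (hgp : Function.Periodic g ρ)
    (hfpos : ∀ t, 0 < f t)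
    (hgint : 0 < ∫ s in (0:ℝ)..ρ, g s)
    (v0 : ℝ)
    (hv0 : v0 = (1 - Real.exp (-(∫ s in (0:ℝ)..ρ, g s))) /
      (∫ s in (0:ℝ)..ρ, Real.exp (-(∫ s' in s..ρ, g s')) * f s))
    (v : ℝ → ℝ)
    (hv : ∀ t, v t = (v0⁻¹ * Real.exp (-(∫ s in (0:ℝ)..t, g s)) +
      ∫ s in (0:ℝ)..t, Real.exp (-(∫ s' in s..t, g s')) * f s)⁻¹) :
    (∀ t, 0 < v t) ∧ Function.Periodic v ρ ∧
    (∀ t, HasDerivAt v (g t * v t - f t * (v t) ^ 2) t) ∧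
    (∀ u : ℝ → ℝ, (∀ t, 0 < u t) → Function.Periodic u ρ →
      (∀ t, HasDerivAt u (g t * u t - f t * (u t) ^ 2) t) → u = v) := by
  set G : ℝ → ℝ := fun t => ∫ s in (0:ℝ)..t, g s with hGdef
  have hgI : ∀ a b : ℝ, IntervalIntegrable g MeasureTheory.volume a b :=
    fun a b => hg.intervalIntegrable a b
  have hGd : ∀ t, HasDerivAt G (g t) t := bps_primitive_hasDerivAt hg
  have hGdiff : Differentiable ℝ G := fun t => (hGd t).differentiableAt
  have hGcont : Continuous G := hGdiff.continuous
  have hsplit : ∀ s t : ℝ, (∫ s' in s..t, g s') = G t - G s := by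
    intro s t
    have h := intervalIntegral.integral_add_adjacent_intervals (hgI 0 s) (hgI s t)
    have h2 : G s + (∫ s' in s..t, g s') = G t := h
    linarith
  set e : ℝ → ℝ := fun s => Real.exp (G s) * f s with hedef
  have hecont : Continuous e := (Real.continuous_exp.comp hGcont).mul hf
  set F : ℝ → ℝ := fun t => ∫ s in (0:ℝ)..t, e s with hFdef
  have hFd : ∀ t, HasDerivAt F (e t) t := bps_primitive_hasDerivAt hecont
  have hint : ∀ t : ℝ, (∫ s in (0:ℝ)..t, Real.exp (-(∫ s' in s..t, g s')) * f s)
      = Real.exp (-(G t)) * F t := by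
    intro t
    rw [hFdef]
    rw [← intervalIntegral.integral_const_mul]
    apply intervalIntegral.integral_congr
    intro s _
    simp only [hedef]
    rw [hsplit s t, show -(G t - G s) = -G t + G s by ring, Real.exp_add]
    ring
  set c := v0⁻¹ with hcdef
  set w : ℝ → ℝ := fun t => Real.exp (-(G t)) * (c + F t) with hwdef
  have hvw : ∀ t, v t = (w t)⁻¹ := by
    intro t
    rw [hv t, hint t]
    congr 1
    simp only [hwdef]
    ring
  have hwd : ∀ t, HasDerivAt w (f t - g t * w t) t := by
    intro t
    have h1 : HasDerivAt (fun t => Real.exp (-(G t))) (-(g t) * Real.exp (-(G t))) t := by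
      have h := ((hGd t).neg).exp
      exact h.congr_deriv (by show Real.exp (-(G t)) * -g t = _; ring)
    have h2 : HasDerivAt (fun t => c + F t) (e t) t := (hFd t).const_add c
    have h3 := h1.mul h2
    refine h3.congr_deriv ?_
    simp only [hwdef, hedef]
    rw [show Real.exp (-(G t)) * (Real.exp (G t) * f t) = f t by
      rw [← mul_assoc, ← Real.exp_add]; simp]
    ring
  have hA : 0 < G ρ := hgint
  have hE1 : Real.exp (-(G ρ)) < 1 := Real.exp_lt_one_iff.mpr (by linarith)
  have hFρ : 0 < F ρ := by
    apply intervalIntegral.intervalIntegral_pos_of_pos_on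
      (hecont.intervalIntegrable _ _) _ hρ
    intro x _
    simp only [hedef]
    exact mul_pos (Real.exp_pos _) (hfpos x)
  have hv0pos : 0 < v0 := by
    rw [hv0, hint ρ]
    apply div_pos
    · have : Real.exp (-(∫ s in (0:ℝ)..ρ, g s)) < 1 := hE1
      linarith
    · exact mul_pos (Real.exp_pos _) hFρ
  have hcpos : 0 < c := by rw [hcdef]; exact inv_pos.mpr hv0pos
  have hw0 : w 0 = c := by
    have hG0 : G 0 = 0 := intervalIntegral.integral_same
    have hF0 : F 0 = 0 := intervalIntegral.integral_same
    simp [hwdef, hG0, hF0]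
  have hwρ : w ρ = c := by
    have hEne : (1 : ℝ) - Real.exp (-(G ρ)) ≠ 0 := by
      have := hE1; intro h; linarith [Real.exp_pos (-(G ρ))]
    have hcE : c * (1 - Real.exp (-(G ρ))) = Real.exp (-(G ρ)) * F ρ := by
      have hv0' : v0 = (1 - Real.exp (-(G ρ))) / (Real.exp (-(G ρ)) * F ρ) := by
        rw [hv0, hint ρ]
      rw [hcdef, hv0', inv_div, div_mul_cancel₀ _ hEne]
    simp only [hwdef]
    linear_combination -hcE
  -- periodicity of w
  have hwper : Function.Periodic w ρ := by
    set d : ℝ → ℝ := fun t => w (t + ρ) - w t with hddef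
    have hd : ∀ t, HasDerivAt d (-(g t * d t)) t := by
      intro t
      have h1 : HasDerivAt (fun t => w (t + ρ)) (f (t + ρ) - g (t + ρ) * w (t + ρ)) t := by
        have h := (hwd (t + ρ)).comp t ((hasDerivAt_id t).add_const ρ)
        exact h.congr_deriv (by simp)
      have h3 := h1.sub (hwd t)
      refine h3.congr_deriv ?_
      rw [hfp t, hgp t]
      simp only [hddef]
      ring
    have hd0 : d 0 = 0 := by
      simp only [hddef, zero_add, hwρ, hw0, sub_self]
    intro t
    have := bps_hom hg d hd t
    rw [hd0, zero_mul] at this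
    have h2 : w (t + ρ) - w t = 0 := this
    linarith
  -- positivity of w
  have hwposnn : ∀ t, 0 ≤ t → 0 < w t := by
    intro t ht
    have hF : 0 ≤ F t := by
      apply intervalIntegral.integral_nonneg ht
      intro x _
      exact le_of_lt (mul_pos (Real.exp_pos _) (hfpos x))
    simp only [hwdef]
    exact mul_pos (Real.exp_pos _) (by linarith)
  have hwpos : ∀ t, 0 < w t := by
    intro t
    obtain ⟨n, hn⟩ := exists_nat_ge (-t / ρ)
    have hn' : 0 ≤ t + n * ρ := by
      have := (div_le_iff₀ hρ).mp hn
      linarith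
    have hper := (hwper.nat_mul n) t
    rw [← hper]
    exact hwposnn _ hn'
  have hwne : ∀ t, w t ≠ 0 := fun t => (hwpos t).ne'
  refine ⟨fun t => by rw [hvw t]; exact inv_pos.mpr (hwpos t),
    fun t => by rw [hvw, hvw, hwper t], ?_, ?_⟩
  · intro t
    have hvd := (hwd t).inv (hwne t)
    have hvw' : HasDerivAt v (-(f t - g t * w t) / w t ^ 2) t :=
      hvd.congr_of_eventuallyEq (Filter.Eventually.of_forall hvw)
    convert hvw' using 1
    rw [hvw t]
    exact bps_aux1 (g t) (f t) (w t) (hwne t)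
  · intro u hupos huper hud
    have hune : ∀ t, u t ≠ 0 := fun t => (hupos t).ne'
    set p : ℝ → ℝ := fun t => (u t)⁻¹ with hpdef
    have hpd : ∀ t, HasDerivAt p (f t - g t * p t) t := by
      intro t
      have h := (hud t).inv (hune t)
      refine h.congr_deriv ?_
      simp only [hpdef]
      exact (bps_aux2 (g t) (f t) (u t) (hune t)).symm
    have hd2 : ∀ t, HasDerivAt (fun t => p t - w t) (-(g t * (p t - w t))) t := by
      intro t
      have h := (hpd t).sub (hwd t)
      exact h.congr_deriv (by ring)
    have hdt := bps_hom hg _ hd2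
    have hper0 : p ρ - w ρ = p 0 - w 0 := by
      have h1 : p ρ = p 0 := by
        simp only [hpdef]
        rw [show (ρ : ℝ) = 0 + ρ by ring, huper 0]
      rw [h1, hwρ, hw0]
    have hρeq : p ρ - w ρ = (p 0 - w 0) * Real.exp (-(G ρ)) := hdt ρ
    rw [hper0] at hρeq
    have hd0 : p 0 - w 0 = 0 := by
      have hz : (p 0 - w 0) * (1 - Real.exp (-(G ρ))) = 0 := by linear_combination hρeq
      rcases mul_eq_zero.mp hz with h | h
      · exact h
      · exfalso; linarith
    have hpw : ∀ t, p t = w t := by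
      intro t
      have h := hdt t
      rw [hd0, zero_mul] at h
      have : p t - w t = 0 := h
      linarith
    funext t
    rw [hvw t, ← hpw t]
    simp only [hpdef, inv_inv]
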